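/- Let X = Fin 3 = {0, 1, 2} with the quandle operation ▷ given by: 0 ▷ j = 0 for all j; 1 ▷ 0 = 2, 1 ▷ 1 = 1, 1 ▷ 2 = 1; 2 ▷ 0 = 1, 2 ▷ 1 = 2, 2 ▷ 2 = 2, and equip X with the indiscrete topology (so every pair of points is joined by a path). Then the quotient of the free abelian group on X by the subgroup generated by all elements (of a) − (of (a ▷ b)), for a, b ∈ X, is a free abelian group of rank 2 (isomorphic as an additive group to ℤ × ℤ). -/

import Mathlib

/-- The quandle operation on `{0, 1, 2}` with table `M = [[0,0,0],[2,1,1],[1,2,2]]`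
(rows give `i ▷ j`). -/
def tableQuandleOp : Fin 3 → Fin 3 → Fin 3 :=
  fun i j => ![![0, 0, 0], ![2, 1, 1], ![1, 2, 2]] i j

noncomputable section

def H0rel : AddSubgroup (FreeAbelianGroup (Fin 3)) :=
  AddSubgroup.closure {z : FreeAbelianGroup (Fin 3) | ∃ a b : Fin 3,
    z = FreeAbelianGroup.of a - FreeAbelianGroup.of (tableQuandleOp a b)}

def fval : Fin 3 → ℤ × ℤ := ![(1, 0), (0, 1), (0, 1)]

def phi : FreeAbelianGroup (Fin 3) →+ ℤ × ℤ := FreeAbelianGroup.lift fval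

lemma rel_le_ker : H0rel ≤ phi.ker := by
  rw [H0rel, AddSubgroup.closure_le]
  rintro z ⟨a, b, rfl⟩
  have h : fval a = fval (tableQuandleOp a b) := by
    fin_cases a <;> fin_cases b <;> decide
  simp [AddMonoidHom.mem_ker, map_sub, phi, FreeAbelianGroup.lift_apply_of, h]

def phiBar : (FreeAbelianGroup (Fin 3) ⧸ H0rel) →+ ℤ × ℤ :=
  QuotientAddGroup.lift H0rel phi rel_le_ker

def psi : ℤ × ℤ →+ (FreeAbelianGroup (Fin 3) ⧸ H0rel) :=
  AddMonoidHom.coprod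
    (zmultiplesHom _ (QuotientAddGroup.mk (FreeAbelianGroup.of 0)))
    (zmultiplesHom _ (QuotientAddGroup.mk (FreeAbelianGroup.of 1)))

lemma of1_eq_of2 :
    (QuotientAddGroup.mk (FreeAbelianGroup.of 1) :
      FreeAbelianGroup (Fin 3) ⧸ H0rel) = QuotientAddGroup.mk (FreeAbelianGroup.of 2) := by
  rw [QuotientAddGroup.eq]
  have htab : tableQuandleOp 1 0 = 2 := by decide
  have h : FreeAbelianGroup.of (1 : Fin 3) - FreeAbelianGroup.of (2 : Fin 3) ∈ H0rel := by
    apply AddSubgroup.subset_closure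
    exact ⟨1, 0, by rw [htab]⟩
  have := H0rel.neg_mem h
  simpa [neg_sub, sub_eq_neg_add] using this

lemma comp1 : phiBar.comp psi = AddMonoidHom.id (ℤ × ℤ) := by
  ext <;> simp [phiBar, psi, phi, FreeAbelianGroup.lift_apply_of, fval]

lemma comp2 : psi.comp phiBar = AddMonoidHom.id _ := by
  apply QuotientAddGroup.addMonoidHom_ext
  apply FreeAbelianGroup.lift_ext _ _
  intro a
  fin_cases a <;>
    simp [phiBar, psi, phi, FreeAbelianGroup.lift_apply_of, fval, QuotientAddGroup.lift_mk']
  exact of1_eq_of2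

theorem H0_table_quandle_indiscrete :
    Nonempty ((FreeAbelianGroup (Fin 3) ⧸ AddSubgroup.closure
      {z : FreeAbelianGroup (Fin 3) | ∃ a b : Fin 3,
        z = FreeAbelianGroup.of a - FreeAbelianGroup.of (tableQuandleOp a b)}) ≃+ ℤ × ℤ) := by
  exact ⟨AddMonoidHom.toAddEquiv phiBar psi comp2 comp1⟩

end
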